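/- If a point v = Σ_{a∈X} v_a a with 0 ≤ v_a ≤ 1 lies on the boundary of the zonotope B(X) = {Σ_{a∈X} t_a a : 0 ≤ t_a ≤ 1}, then the set A = {a ∈ X : 0 < v_a < 1} does not span V. -/

import Mathlib

/-- if `v = Σ v_a a` (with `0 ≤ v_a ≤ 1`) lies on the boundary of the
zonotope `B(X)`, then `A = {a ∈ X : 0 < v_a < 1}` does not span `V`. -/
theorem boundary_point_of_zonotope
    {s : ℕ} {ι : Type*} [Fintype ι] (X : ι → (Fin s → ℝ))
    (hspan : Submodule.span ℝ (Set.range X) = ⊤)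
    (v : ι → ℝ) (hv : ∀ i, v i ∈ Set.Icc (0 : ℝ) 1)
    (hb : (∑ i, v i • X i) ∈ frontier {x : Fin s → ℝ |
        ∃ t : ι → ℝ, (∀ i, t i ∈ Set.Icc (0 : ℝ) 1) ∧ x = ∑ i, t i • X i}) :
    Submodule.span ℝ (X '' {i | 0 < v i ∧ v i < 1}) ≠ ⊤ := by
  classical
  intro hA
  set S : Set (Fin s → ℝ) := {x : Fin s → ℝ |
      ∃ t : ι → ℝ, (∀ i, t i ∈ Set.Icc (0 : ℝ) 1) ∧ x = ∑ i, t i • X i} with hSdef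
  set p : Fin s → ℝ := ∑ i, v i • X i with hp
  -- the linear map supported on the "interior" coordinates
  let L : (ι → ℝ) →ₗ[ℝ] (Fin s → ℝ) :=
  { toFun := fun t => ∑ i, (if 0 < v i ∧ v i < 1 then t i else 0) • X i
    map_add' := fun a b => by
      rw [← Finset.sum_add_distrib]
      refine Finset.sum_congr rfl fun i _ => ?_
      split_ifs <;> simp [add_smul]
    map_smul' := fun c a => by
      rw [RingHom.id_apply, Finset.smul_sum]
      refine Finset.sum_congr rfl fun i _ => ?_
      split_ifs <;> simp [smul_smul] }
  have hrange : LinearMap.range L = ⊤ := by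
    rw [← top_le_iff, ← hA, Submodule.span_le]
    rintro x ⟨i, hi, rfl⟩
    refine ⟨Pi.single i (1 : ℝ), ?_⟩
    simp only [L, LinearMap.coe_mk, AddHom.coe_mk]
    rw [Finset.sum_eq_single i]
    · simp [hi.1, hi.2]
    · intro j _ hj
      simp [Pi.single_eq_of_ne hj]
    · simp
  let Lc : (ι → ℝ) →L[ℝ] (Fin s → ℝ) := L.toContinuousLinearMap
  have hsurj : Function.Surjective Lc := by
    refine (LinearMap.range_eq_top (f := L)).mp ?_
    exact hrange
  have hopenL : IsOpenMap Lc := Lc.isOpenMap hsurj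
  -- pick ε
  obtain ⟨ε, hε0, hε⟩ : ∃ ε > 0, ∀ i, 0 < v i ∧ v i < 1 → ε ≤ v i ∧ v i + ε ≤ 1 := by
    classical
    set F := Finset.univ.filter (fun i => 0 < v i ∧ v i < 1) with hF
    rcases F.eq_empty_or_nonempty with h | h
    · refine ⟨1, one_pos, fun i hi => ?_⟩
      have : i ∈ F := Finset.mem_filter.mpr ⟨Finset.mem_univ i, hi⟩
      rw [h] at this
      exact absurd this (Finset.notMem_empty i)
    · refine ⟨F.inf' h (fun i => min (v i) (1 - v i)), ?_, ?_⟩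
      · rw [gt_iff_lt, Finset.lt_inf'_iff]
        intro i hi
        have := (Finset.mem_filter.mp hi).2
        exact lt_min this.1 (by linarith [this.2])
      · intro i hi
        have h1 : F.inf' h (fun i => min (v i) (1 - v i)) ≤ min (v i) (1 - v i) :=
          Finset.inf'_le _ (Finset.mem_filter.mpr ⟨Finset.mem_univ i, hi⟩)
        have h2 := min_le_left (v i) (1 - v i)
        have h3 := min_le_right (v i) (1 - v i)
        constructor <;> linarith
  -- the translated image is inside S
  have hsub : (fun x => p + x) '' (Lc '' Metric.ball 0 ε) ⊆ S := by
    rintro _ ⟨_, ⟨t, ht, rfl⟩, rfl⟩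
    have htnorm : ‖t‖ < ε := by simpa using ht
    refine ⟨fun i => v i + (if 0 < v i ∧ v i < 1 then t i else 0), fun i => ?_, ?_⟩
    · have h1 := (hv i).1; have h2 := (hv i).2
      show v i + (if 0 < v i ∧ v i < 1 then t i else 0) ∈ Set.Icc (0:ℝ) 1
      rw [Set.mem_Icc]
      split_ifs with h
      · have hti : |t i| < ε := lt_of_le_of_lt (norm_le_pi_norm t i) htnorm
        obtain ⟨ha, hb'⟩ := hε i h
        rw [abs_lt] at hti
        constructor <;> [linarith; linarith]
      · exact ⟨by linarith, by linarith⟩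
    · show p + Lc t = _
      show p + ∑ i, (if 0 < v i ∧ v i < 1 then t i else 0) • X i = _
      rw [hp, ← Finset.sum_add_distrib]
      refine Finset.sum_congr rfl fun i _ => ?_
      rw [← add_smul]
  have hmem : p ∈ (fun x => p + x) '' (Lc '' Metric.ball 0 ε) := by
    refine ⟨0, ⟨0, Metric.mem_ball_self hε0, by simp⟩, by simp⟩
  have hopen : IsOpen ((fun x => p + x) '' (Lc '' Metric.ball 0 ε)) :=
    (isOpenMap_add_left p) _ (hopenL _ Metric.isOpen_ball)
  have hint : p ∈ interior S := interior_maximal hsub hopen hmem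
  exact hb.2 hint
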